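/- For every locally constant, compactly supported function h : X^γ → k there exists a γ-invariant function f ∈ C_c^∞(X, k) whose restriction to X^γ equals h. That is, the restriction map from the space of γ-invariant elements of C_c^∞(X, k) to C_c^∞(X^γ, k) is surjective. -/

import Mathlib

open Set

noncomputable section PWL

variable {ι X k : Type*} [Zero k]

open Classical in
/-- Piecewise function given by a list of sets with values. -/
noncomputable def piecewiseList (V : ι → Set X) (c : ι → k) : List ι → X → k
  | [], _ => 0
  | a :: L, x => if x ∈ V a then c a else piecewiseList V c L x

variable [TopologicalSpace X] {V : ι → Set X} {c : ι → k}

theorem piecewiseList_lc (hV : ∀ a, IsClopen (V a)) (L : List ι) :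
    IsLocallyConstant (piecewiseList V c L) := by
  induction L with
  | nil => exact IsLocallyConstant.const 0
  | cons a L ih =>
    rw [IsLocallyConstant.iff_exists_open]
    intro x
    by_cases hx : x ∈ V a
    · refine ⟨V a, (hV a).isOpen, hx, fun y hy => ?_⟩
      simp [piecewiseList, hx, hy]
    · obtain ⟨U, hU, hxU, hUc⟩ := ih.exists_open x
      refine ⟨U ∩ (V a)ᶜ, hU.inter (hV a).compl.isOpen, ⟨hxU, hx⟩, fun y hy => ?_⟩
      simp only [piecewiseList, if_neg hy.2, if_neg hx]
      exact hUc y hy.1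

theorem piecewiseList_zero {L : List ι} {x : X} (hx : x ∉ ⋃ a ∈ L, V a) :
    piecewiseList V c L x = 0 := by
  induction L with
  | nil => rfl
  | cons a L ih =>
    simp only [List.mem_cons, iUnion_iUnion_eq_or_left, mem_union, not_or] at hx
    simp only [piecewiseList, if_neg hx.1]
    exact ih hx.2

theorem piecewiseList_mem {L : List ι} {x : X} (hx : x ∈ ⋃ a ∈ L, V a) :
    ∃ a ∈ L, x ∈ V a ∧ piecewiseList V c L x = c a := by
  induction L with
  | nil => simp at hx
  | cons a L ih =>
    by_cases hxa : x ∈ V a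
    · exact ⟨a, List.mem_cons_self, hxa, by simp [piecewiseList, hxa]⟩
    · simp only [List.mem_cons, iUnion_iUnion_eq_or_left, mem_union, hxa, false_or] at hx
      obtain ⟨b, hbL, hxb, hval⟩ := ih hx
      exact ⟨b, List.mem_cons_of_mem a hbL, hxb, by simpa [piecewiseList, hxa] using hval⟩

theorem isCompact_biUnion_list {L : List ι} (hV : ∀ a, IsCompact (V a)) :
    IsCompact (⋃ a ∈ L, V a) := by
  induction L with
  | nil => simp
  | cons a L ih =>
    simp only [List.mem_cons, iUnion_iUnion_eq_or_left]
    exact (hV a).union ih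

end PWL

/-- Extension of locally constant compactly supported functions from a subtype. -/
theorem exists_lc_extension {X : Type*} [TopologicalSpace X] [LocallyCompactSpace X]
    [T2Space X] [TotallyDisconnectedSpace X] {k : Type*} [AddGroup k] {p : X → Prop}
    (h : {x // p x} → k) (hlc : IsLocallyConstant h) (hcs : HasCompactSupport h) :
    ∃ f : X → k, IsLocallyConstant f ∧ HasCompactSupport f ∧ ∀ y : {x // p x}, f y = h y := by
  classical
  set S : Set X := Subtype.val '' tsupport h with hS
  have hScomp : IsCompact S := hcs.image continuous_subtype_val
  have key : ∀ y : {x // p x}, ∃ V : Set X, IsClopen V ∧ IsCompact V ∧ (y : X) ∈ V ∧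
      ∀ z : {x // p x}, (z : X) ∈ V → h z = h y := by
    intro y
    obtain ⟨U, hU, hyU, hUc⟩ := hlc.exists_open y
    obtain ⟨O, hO, rfl⟩ := isOpen_induced_iff.mp hU
    obtain ⟨K, hK, hyK, hKO⟩ := exists_compact_subset hO hyU
    obtain ⟨V, hVb, hyV, hVK⟩ :=
      loc_compact_Haus_tot_disc_of_zero_dim.exists_subset_of_mem_open hyK isOpen_interior
    refine ⟨V, hVb, hK.of_isClosed_subset hVb.isClosed (hVK.trans interior_subset), hyV,
      fun z hz => hUc z (hKO (interior_subset (hVK hz)))⟩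
  choose V hVclopen hVcomp hVmem hVconst using key
  have hcover : S ⊆ ⋃ y : {x // p x}, V y := by
    rintro x ⟨y, hy, rfl⟩
    exact mem_iUnion.mpr ⟨y, hVmem y⟩
  obtain ⟨t, ht⟩ := hScomp.elim_finite_subcover _ (fun y => (hVclopen y).isOpen) hcover
  set L := t.toList with hL
  have htL : ∀ a, a ∈ L ↔ a ∈ t := fun a => Finset.mem_toList
  refine ⟨piecewiseList V (fun a => h a) L, piecewiseList_lc hVclopen L, ?_, ?_⟩
  · exact HasCompactSupport.intro (isCompact_biUnion_list hVcomp)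
      (fun x hx => piecewiseList_zero hx)
  · intro y
    by_cases hy : (y : X) ∈ ⋃ a ∈ L, V a
    · obtain ⟨a, _, hya, hval⟩ := piecewiseList_mem (c := fun a : {x // p x} => h a) hy
      rw [hval, hVconst a y hya]
    · rw [piecewiseList_zero hy]
      by_contra hne
      have hyS : (y : X) ∈ S := ⟨y, subset_tsupport h (fun hc => hne hc.symm), rfl⟩
      obtain ⟨a, hat, hya⟩ := mem_iUnion₂.mp (ht hyS)
      exact hy (mem_iUnion₂.mpr ⟨a, (htL a).mpr hat, hya⟩)

/-- Let `γ` be a homeomorphism, of order dividing the prime `l`, of a locally compact,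
Hausdorff, totally disconnected, second countable space `X`. Every locally constant,
compactly supported `k`-valued function `h` on the fixed-point set `X^γ` is the
restriction of a `γ`-invariant locally constant, compactly supported function on `X`;
i.e. the restriction map `C_c^∞(X, k)^γ → C_c^∞(X^γ, k)` is surjective. -/
theorem extend_invariant_locallyConstant_compactSupport
    (l : ℕ) (hl : l.Prime)
    (X : Type*) [TopologicalSpace X] [LocallyCompactSpace X] [T2Space X]
    [TotallyDisconnectedSpace X] [SecondCountableTopology X]
    (γ : X ≃ₜ X) (hγl : ∀ x, (⇑γ)^[l] x = x)
    (k : Type*) [Field k]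
    (h : {x : X // γ x = x} → k) (hlc : IsLocallyConstant h)
    (hcs : HasCompactSupport h) :
    ∃ f : X → k, IsLocallyConstant f ∧ HasCompactSupport f ∧
      (∀ x, f (γ x) = f x) ∧ ∀ y : {x : X // γ x = x}, f y = h y := by
  classical
  obtain ⟨f₀, hf₀lc, hf₀cs, hf₀ext⟩ := exists_lc_extension h hlc hcs
  set W : Set X := {x | ∀ i < l, f₀ ((⇑γ)^[i] x) = f₀ x} with hWdef
  have hWmem : ∀ x, x ∈ W ↔ ∀ i < l, f₀ ((⇑γ)^[i] x) = f₀ x := fun x => Iff.rfl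
  -- W is forward invariant
  have hW1 : ∀ x ∈ W, γ x ∈ W := by
    intro x hx i hi
    have h1 : f₀ (γ x) = f₀ x := by simpa using hx 1 hl.one_lt
    rw [← Function.iterate_succ_apply]
    rcases eq_or_lt_of_le (Nat.succ_le_of_lt hi) with he | hlt
    · rw [he, hγl x, h1]
    · rw [hx (i + 1) hlt, h1]
  have hWiter : ∀ n, ∀ x ∈ W, (⇑γ)^[n] x ∈ W := by
    intro n
    induction n with
    | zero => exact fun x hx => hx
    | succ n ih =>
      intro x hx
      rw [Function.iterate_succ_apply]
      exact ih _ (hW1 x hx)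
  have hW2 : ∀ x, γ x ∈ W → x ∈ W := by
    intro x hx
    have h3 := hWiter (l - 1) _ hx
    have h2 : (⇑γ)^[l - 1] (γ x) = x := by
      rw [← Function.iterate_succ_apply, Nat.succ_eq_add_one, Nat.sub_add_cancel hl.one_lt.le, hγl]
    rwa [h2] at h3
  have hWclopen : IsClopen W := by
    have : W = ⋂ i ∈ Finset.range l, {x | f₀ ((⇑γ)^[i] x) - f₀ x = 0} := by
      ext x
      simp only [hWdef, Set.mem_setOf_eq, Set.mem_iInter, Finset.mem_range, sub_eq_zero]
    rw [this]
    refine Set.Finite.isClopen_biInter (Finset.finite_toSet _) (fun i _ => ?_)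
    exact IsLocallyConstant.isClopen_fiber
      ((hf₀lc.comp_continuous (γ.continuous.iterate i)).sub hf₀lc) 0
  have hWopen : IsOpen W := hWclopen.isOpen
  have hWclosed : IsClosed W := hWclopen.isClosed
  refine ⟨fun x => if x ∈ W then f₀ x else 0, ?_, ?_, ?_, ?_⟩
  · rw [IsLocallyConstant.iff_exists_open]
    intro x
    by_cases hx : x ∈ W
    · obtain ⟨U, hU, hxU, hUc⟩ := hf₀lc.exists_open x
      refine ⟨U ∩ W, hU.inter hWopen, ⟨hxU, hx⟩, fun y hy => ?_⟩
      simp only [if_pos hy.2, if_pos hx]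
      exact hUc y hy.1
    · refine ⟨Wᶜ, hWclosed.isOpen_compl, hx, fun y hy => ?_⟩
      rw [if_neg hy, if_neg hx]
  · refine hf₀cs.mono ?_
    intro x hx
    simp only [Function.mem_support] at hx ⊢
    intro hc
    apply hx
    split
    · exact hc
    · rfl
  · intro x
    by_cases hx : x ∈ W
    · have hγx : γ x ∈ W := hW1 x hx
      simp only [if_pos hx, if_pos hγx]
      simpa using hx 1 hl.one_lt
    · have hγx : γ x ∉ W := fun hc => hx (hW2 x hc)
      simp [hx, hγx]
  · intro y
    have hyW : (y : X) ∈ W := by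
      intro i _
      rw [Function.iterate_fixed y.prop]
    show (if (y : X) ∈ W then f₀ y else 0) = h y
    rw [if_pos hyW, hf₀ext]
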